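/- Let $A, B$ be disjoint sets of size $n$ and suppose there exist pairwise edge-disjoint bipartite graphs $G_1, \dots, G_m$ with parts $A, B$ such that for any distinct $x_1, \dots, x_s \in A \cup B$, fewer than $t$ vertices $y \in A \cup B$ satisfy: there exists $i \in [m]$ with $x_1 y, \dots, x_s y \in E(G_i)$. Let $e = \sum_{i=1}^m e(G_i)$. Then there exists a $2k$-uniform hypergraph on $2kn$ vertices with at least $e^k/m$ edges containing no copy of $K_{s,t}^{(2k)}$; in particular $\mathrm{ex}(2kn, K_{s,t}^{(2k)}) \ge e^k/m$. -/

import Mathlib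

/-- Adjacency in a bipartite graph on parts `A ⊕ B` (both copies of `Fin n`),
whose edge set is given as a finset of pairs in `A × B`. -/
def badj {n : ℕ} (E : Finset (Fin n × Fin n)) :
    (Fin n ⊕ Fin n) → (Fin n ⊕ Fin n) → Prop
  | Sum.inl a, Sum.inr b => (a, b) ∈ E
  | Sum.inr b, Sum.inl a => (a, b) ∈ E
  | _, _ => False

/-- The `r`-uniform hypergraph `G` contains a copy of `K_{s,t}^{(r)}`. -/
def ContainsKst {V : Type*} [DecidableEq V] (r s t : ℕ)
    (G : Finset (Finset V)) : Prop :=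
  ∃ (X : Finset V) (Y : Fin t → Finset V),
    X.card = s ∧ (∀ i, (Y i).card = r - 1) ∧
    (∀ i, Disjoint X (Y i)) ∧ (∀ i j, i ≠ j → Disjoint (Y i) (Y j)) ∧
    ∀ x ∈ X, ∀ i, insert x (Y i) ∈ G

namespace KstAux

variable {n m k : ℕ}

/-- vertex set of the `2k`-partite hypergraph -/
abbrev W (k n : ℕ) := Fin k × (Fin n ⊕ Fin n)

/-- position of a vertex: (block, side) -/
def pos : W k n → Fin k × Bool
  | (ℓ, Sum.inl _) => (ℓ, true)
  | (ℓ, Sum.inr _) => (ℓ, false)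

lemma pos_fst (v : W k n) : (pos v).1 = v.1 := by
  rcases v with ⟨ℓ, a | b⟩ <;> rfl

def wmap (f : Fin k → Fin n × Fin n) (q : Fin k × Bool) : W k n :=
  (q.1, if q.2 then Sum.inl (f q.1).1 else Sum.inr (f q.1).2)

lemma pos_wmap (f : Fin k → Fin n × Fin n) (q : Fin k × Bool) : pos (wmap f q) = q := by
  rcases q with ⟨ℓ, b⟩
  cases b <;> simp [wmap, pos]

/-- the `2k`-element edge associated to a choice of one pair per block -/
def edgeOf (f : Fin k → Fin n × Fin n) : Finset (W k n) :=
  Finset.image (wmap f) Finset.univ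

lemma wmap_injective (f : Fin k → Fin n × Fin n) : Function.Injective (wmap f) := by
  intro q q' h
  have := congrArg pos h
  rwa [pos_wmap, pos_wmap] at this

lemma card_edgeOf (f : Fin k → Fin n × Fin n) : (edgeOf f).card = 2 * k := by
  rw [edgeOf, Finset.card_image_of_injective _ (wmap_injective f)]
  simp [two_mul]; ring

lemma mem_edgeOf {f : Fin k → Fin n × Fin n} {v : W k n} :
    v ∈ edgeOf f ↔ v = wmap f (pos v) := by
  constructor
  · intro hv
    rcases Finset.mem_image.1 hv with ⟨q, -, rfl⟩
    rw [pos_wmap]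
  · intro h
    rw [h]; exact Finset.mem_image_of_mem _ (Finset.mem_univ _)

lemma wmap_mem_edgeOf (f : Fin k → Fin n × Fin n) (q : Fin k × Bool) :
    wmap f q ∈ edgeOf f := Finset.mem_image_of_mem _ (Finset.mem_univ _)

lemma pos_injOn_edgeOf (f : Fin k → Fin n × Fin n) :
    Set.InjOn pos (edgeOf f : Set (W k n)) := by
  intro u hu v hv h
  rw [mem_edgeOf.1 hu, mem_edgeOf.1 hv, h]

lemma image_pos_edgeOf (f : Fin k → Fin n × Fin n) :
    (edgeOf f).image pos = Finset.univ := by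
  apply Finset.eq_univ_of_forall
  intro q
  exact Finset.mem_image.2 ⟨wmap f q, wmap_mem_edgeOf f q, pos_wmap f q⟩

lemma edgeOf_injective :
    Function.Injective (edgeOf : (Fin k → Fin n × Fin n) → Finset (W k n)) := by
  intro f f' h
  funext ℓ
  have h1 : wmap f (ℓ, true) = wmap f' (ℓ, true) := by
    have h0 : wmap f (ℓ, true) ∈ edgeOf f' := h ▸ wmap_mem_edgeOf f (ℓ, true)
    have := mem_edgeOf.1 h0
    rwa [pos_wmap] at this
  have h2 : wmap f (ℓ, false) = wmap f' (ℓ, false) := by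
    have h0 : wmap f (ℓ, false) ∈ edgeOf f' := h ▸ wmap_mem_edgeOf f (ℓ, false)
    have := mem_edgeOf.1 h0
    rwa [pos_wmap] at this
  simp [wmap] at h1 h2
  exact Prod.ext h1 h2

/-- if two vertices both complete the same set `A` to edges, they have the same position -/
lemma pos_eq_of_completions {f f' : Fin k → Fin n × Fin n} {A : Finset (W k n)}
    {x x' : W k n} (hx : insert x A = edgeOf f) (hx' : insert x' A = edgeOf f')
    (hxA : x ∉ A) (hx'A : x' ∉ A) : pos x = pos x' := by
  have hxp : pos x ∉ A.image pos := by
    intro h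
    rcases Finset.mem_image.1 h with ⟨a, ha, hpa⟩
    have hax : a ∈ edgeOf f := by rw [← hx]; exact Finset.mem_insert_of_mem ha
    have hxx : x ∈ edgeOf f := by rw [← hx]; exact Finset.mem_insert_self _ _
    exact hxA (pos_injOn_edgeOf f hax hxx hpa ▸ ha)
  have hx'p : pos x' ∉ A.image pos := by
    intro h
    rcases Finset.mem_image.1 h with ⟨a, ha, hpa⟩
    have hax : a ∈ edgeOf f' := by rw [← hx']; exact Finset.mem_insert_of_mem ha
    have hxx : x' ∈ edgeOf f' := by rw [← hx']; exact Finset.mem_insert_self _ _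
    exact hx'A (pos_injOn_edgeOf f' hax hxx hpa ▸ ha)
  have huniv : insert (pos x) (A.image pos) = Finset.univ := by
    rw [← Finset.image_insert, hx, image_pos_edgeOf]
  have : pos x' ∈ insert (pos x) (A.image pos) := huniv ▸ Finset.mem_univ _
  rcases Finset.mem_insert.1 this with h | h
  · exact h.symm
  · exact absurd h hx'p

/-- two edges through the same `A` agree away from the position of the extra vertex -/
lemma wmap_eq_of_completions {f f' : Fin k → Fin n × Fin n} {A : Finset (W k n)}
    {x : W k n} (hx : insert x A = edgeOf f) (hA : A ⊆ edgeOf f')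
    {q : Fin k × Bool} (hq : q ≠ pos x) : wmap f q = wmap f' q := by
  have h1 : wmap f q ∈ insert x A := hx ▸ wmap_mem_edgeOf f q
  rcases Finset.mem_insert.1 h1 with h | h
  · exact absurd (h ▸ pos_wmap f q : pos x = q).symm hq
  · have h2 : wmap f q ∈ edgeOf f' := hA h
    have := mem_edgeOf.1 h2
    rwa [pos_wmap] at this

lemma cardP (E : Fin m → Finset (Fin n × Fin n)) :
    (Finset.univ.filter (fun w : Fin m × (Fin n × Fin n) => w.2 ∈ E w.1)).card
      = ∑ i, (E i).card := by
  rw [Finset.card_filter, Fintype.sum_prod_type]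
  congr 1
  ext i
  simp only []
  rw [Finset.sum_ite_mem, Finset.univ_inter, Finset.card_eq_sum_ones]

lemma cardS (E : Fin m → Finset (Fin n × Fin n)) :
    (Finset.univ.filter (fun q : (Fin k → Fin n × Fin n) × (Fin k → Fin m) =>
        ∀ ℓ, q.1 ℓ ∈ E (q.2 ℓ))).card = (∑ i, (E i).card) ^ k := by
  rw [← Finset.card_nbij' (s := Fintype.piFinset (fun _ : Fin k =>
      (Finset.univ.filter (fun w : Fin m × (Fin n × Fin n) => w.2 ∈ E w.1))))
    (i := fun g => (fun ℓ => (g ℓ).2, fun ℓ => (g ℓ).1))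
    (j := fun q => fun ℓ => (q.2 ℓ, q.1 ℓ))
    (by intro a ha; simp only [Fintype.mem_piFinset, Finset.mem_filter, Finset.mem_coe,
        Finset.mem_univ, true_and] at ha ⊢; exact ha)
    (by intro a ha; simp only [Fintype.mem_piFinset, Finset.mem_filter, Finset.mem_coe,
        Finset.mem_univ, true_and] at ha ⊢; exact ha)
    (by intro a _; rfl) (by intro a _; rfl)]
  rw [Fintype.card_piFinset]
  rw [Finset.prod_const, cardP, Finset.card_univ, Fintype.card_fin]

lemma fin_cast_zmod_inj [NeZero m] {a b : Fin m}
    (h : ((a : ℕ) : ZMod m) = ((b : ℕ) : ZMod m)) : a = b := by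
  have := congrArg ZMod.val h
  rw [ZMod.val_cast_of_lt a.isLt, ZMod.val_cast_of_lt b.isLt] at this
  exact Fin.ext this

lemma containsKst_of_image {V V' : Type*} [DecidableEq V] [DecidableEq V'] (e : V ≃ V')
    {r s t : ℕ} {G : Finset (Finset V)}
    (h : ContainsKst r s t (G.image (Finset.image e))) : ContainsKst r s t G := by
  obtain ⟨X, Y, hX, hY, hXY, hYY, hmem⟩ := h
  refine ⟨X.image e.symm, fun i => (Y i).image e.symm, ?_, ?_, ?_, ?_, ?_⟩
  · rw [Finset.card_image_of_injective _ e.symm.injective, hX]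
  · intro i; rw [Finset.card_image_of_injective _ e.symm.injective]; exact hY i
  · intro i; exact (Finset.disjoint_image e.symm.injective).2 (hXY i)
  · intro i j hij; exact (Finset.disjoint_image e.symm.injective).2 (hYY i j hij)
  · intro x hx i
    rcases Finset.mem_image.1 hx with ⟨x', hx', rfl⟩
    rcases Finset.mem_image.1 (hmem x' hx' i) with ⟨A, hA, hAe⟩
    have h1 : Finset.image (⇑e.symm) (Finset.image (⇑e) A) = A := by
      rw [Finset.image_image]; simp
    rw [hAe, Finset.image_insert] at h1
    exact h1 ▸ hA

end KstAux
open KstAux in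
/-- Lower bound lemma: from `m` pairwise edge-disjoint bipartite graphs on parts
of size `n` in which no `s` distinct vertices have `t` common neighbours (within
one of the graphs), one obtains a `K_{s,t}^{(2k)}`-free `2k`-uniform hypergraph
on `2kn` vertices with at least `e^k/m` edges. -/
theorem stmt_4 (n m s t k : ℕ) (hs : 2 ≤ s) (ht : 1 ≤ t) (hk : 1 ≤ k)
    (E : Fin m → Finset (Fin n × Fin n))
    (hdisj : ∀ i j, i ≠ j → Disjoint (E i) (E j))
    (hrich : ∀ x : Fin s → (Fin n ⊕ Fin n), Function.Injective x →
      {y : Fin n ⊕ Fin n | ∃ i, ∀ j, badj (E i) (x j) y}.ncard < t) :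
    ∃ G : Finset (Finset (Fin (2 * k * n))),
      (∀ e ∈ G, e.card = 2 * k) ∧ ¬ ContainsKst (2 * k) s t G ∧
      (∑ i, (E i).card) ^ k ≤ m * G.card := by
  classical
  rcases Nat.eq_zero_or_pos m with rfl | hm
  · refine ⟨∅, by simp, ?_, ?_⟩
    · rintro ⟨X, Y, hX, -, -, -, hmem⟩
      obtain ⟨x, hx⟩ : X.Nonempty := by rw [← Finset.card_pos, hX]; omega
      exact absurd (hmem x hx ⟨0, ht⟩) (Finset.notMem_empty _)
    · have h0 : (∑ i : Fin 0, (E i).card) = 0 := rfl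
      simp [h0, Nat.zero_pow hk]
  haveI : NeZero m := ⟨hm.ne'⟩
  set S : Finset ((Fin k → Fin n × Fin n) × (Fin k → Fin m)) :=
    Finset.univ.filter (fun q => ∀ ℓ, q.1 ℓ ∈ E (q.2 ℓ)) with hSdef
  set σ : ((Fin k → Fin n × Fin n) × (Fin k → Fin m)) → ZMod m :=
    fun q => ∑ ℓ, ((q.2 ℓ : ℕ) : ZMod m) with hσdef
  have hfib : ∑ p : ZMod m, (S.filter (fun q => σ q = p)).card = (∑ i, (E i).card) ^ k := by
    rw [← Finset.card_eq_sum_card_fiberwise (fun x _ => Finset.mem_univ (σ x))]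
    exact cardS E
  obtain ⟨p, -, hp⟩ := Finset.exists_le_of_sum_le (s := (Finset.univ : Finset (ZMod m)))
      (f := fun _ => (∑ i, (E i).card) ^ k)
      (g := fun p => m * (S.filter (fun q => σ q = p)).card)
      Finset.univ_nonempty (by
        rw [Finset.sum_const, ← Finset.mul_sum, hfib, Finset.card_univ, ZMod.card,
          smul_eq_mul])
  have hidx : ∀ {a : Fin n × Fin n} {i j : Fin m}, a ∈ E i → a ∈ E j → i = j := by
    intro a i j hi hj
    by_contra hne
    exact (Finset.disjoint_left.1 (hdisj i j hne)) hi hj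
  set T : Finset (Fin k → Fin n × Fin n) :=
    (S.filter (fun q => σ q = p)).image Prod.fst with hTdef
  have hcardT : T.card = (S.filter (fun q => σ q = p)).card := by
    apply Finset.card_image_of_injOn
    intro q hq q' hq' hfst
    simp only [Finset.mem_coe, Finset.mem_filter, hSdef, Finset.mem_univ, true_and]
      at hq hq'
    have h2 : q.2 = q'.2 := funext fun ℓ =>
      hidx (a := q'.1 ℓ) (by rw [← hfst]; exact hq.1 ℓ) (hq'.1 ℓ)
    exact Prod.ext hfst h2
  have hmemT : ∀ f, f ∈ T ↔ ∃ ι : Fin k → Fin m,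
      (∀ ℓ, f ℓ ∈ E (ι ℓ)) ∧ ∑ ℓ, ((ι ℓ : ℕ) : ZMod m) = p := by
    intro f
    constructor
    · intro hf
      rcases Finset.mem_image.1 hf with ⟨q, hq, rfl⟩
      simp only [Finset.mem_filter, hSdef, Finset.mem_univ, true_and] at hq
      exact ⟨q.2, hq.1, hq.2⟩
    · rintro ⟨ι, h1, h2⟩
      exact Finset.mem_image.2 ⟨(f, ι), Finset.mem_filter.2
        ⟨Finset.mem_filter.2 ⟨Finset.mem_univ _, h1⟩, h2⟩, rfl⟩
  set G' : Finset (Finset (W k n)) := T.image edgeOf with hG'def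
  have hfree : ¬ ContainsKst (2 * k) s t G' := by
    rintro ⟨X, Y, hXcard, hYcard, hXY, hYY, hmem⟩
    have hedge : ∀ x ∈ X, ∀ i, ∃ f, (∃ ι : Fin k → Fin m,
        (∀ ℓ, f ℓ ∈ E (ι ℓ)) ∧ ∑ ℓ, ((ι ℓ : ℕ) : ZMod m) = p) ∧
        insert x (Y i) = edgeOf f := by
      intro x hx i
      rcases Finset.mem_image.1 (hmem x hx i) with ⟨f, hf, hfe⟩
      exact ⟨f, (hmemT f).1 hf, hfe.symm⟩
    obtain ⟨x₀, hx₀⟩ : X.Nonempty := by rw [← Finset.card_pos, hXcard]; omega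
    choose f₀ hf₀ hins₀ using hedge x₀ hx₀
    choose ι₀ hι₀ hσ₀ using hf₀
    set ℓ₀ := (pos x₀).1 with hℓ₀def
    set b₀ := (pos x₀).2 with hb₀def
    have hpx₀ : pos x₀ = (ℓ₀, b₀) := rfl
    have hnotmem : ∀ x ∈ X, ∀ i, x ∉ Y i := fun x hx i =>
      Finset.disjoint_left.1 (hXY i) hx
    set y : Fin t → (Fin n ⊕ Fin n) := fun i =>
      if b₀ then Sum.inr ((f₀ i ℓ₀).2) else Sum.inl ((f₀ i ℓ₀).1) with hydef
    have hyY : ∀ i, (ℓ₀, y i) ∈ Y i := by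
      intro i
      have h1 : ((ℓ₀, y i) : W k n) = wmap (f₀ i) (ℓ₀, !b₀) := by
        cases hb : b₀ <;> simp [hydef, wmap, hb]
      have h2 : ((ℓ₀, y i) : W k n) ∈ insert x₀ (Y i) := by
        rw [hins₀ i, h1]; exact wmap_mem_edgeOf _ _
      rcases Finset.mem_insert.1 h2 with h | h
      · exfalso
        have h3 := congrArg pos h
        rw [h1, pos_wmap, hpx₀] at h3
        simp at h3
      · exact h
    have hy_inj : Function.Injective y := by
      intro i j hij
      by_contra hne
      have h1 : ((ℓ₀, y i) : W k n) ∈ Y j := by rw [hij]; exact hyY j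
      exact (Finset.disjoint_left.1 (hYY i j hne)) (hyY i) h1
    have key : ∀ i, ∀ x ∈ X, badj (E (ι₀ i ℓ₀)) x.2 (y i) := by
      intro i x hx
      obtain ⟨f, ⟨ι, hι, hσs⟩, hins⟩ := hedge x hx i
      have hpos : pos x = pos x₀ :=
        pos_eq_of_completions hins (hins₀ i) (hnotmem x hx i) (hnotmem x₀ hx₀ i)
      have hsub : Y i ⊆ edgeOf (f₀ i) := by
        rw [← hins₀ i]; exact Finset.subset_insert _ _
      have hq : ∀ q : Fin k × Bool, q ≠ (ℓ₀, b₀) → wmap f q = wmap (f₀ i) q := by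
        intro q hq'
        exact wmap_eq_of_completions hins hsub (by rw [hpos, hpx₀]; exact hq')
      have hblk : ∀ ℓ, ℓ ≠ ℓ₀ → f ℓ = f₀ i ℓ := by
        intro ℓ hℓ
        have h1 := hq (ℓ, true) (by simp [Prod.ext_iff, hℓ])
        have h2 := hq (ℓ, false) (by simp [Prod.ext_iff, hℓ])
        simp [wmap] at h1 h2
        exact Prod.ext h1 h2
      have hidxeq : ∀ ℓ, ℓ ≠ ℓ₀ → ι ℓ = ι₀ i ℓ := by
        intro ℓ hℓ
        exact hidx (hι ℓ) (by rw [hblk ℓ hℓ]; exact hι₀ i ℓ)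
      have hsum : ι ℓ₀ = ι₀ i ℓ₀ := by
        apply fin_cast_zmod_inj (m := m)
        have h1 : (∑ ℓ ∈ Finset.univ.erase ℓ₀, ((ι ℓ : ℕ) : ZMod m))
              + ((ι ℓ₀ : ℕ) : ZMod m)
            = (∑ ℓ ∈ Finset.univ.erase ℓ₀, ((ι₀ i ℓ : ℕ) : ZMod m))
              + ((ι₀ i ℓ₀ : ℕ) : ZMod m) := by
          rw [Finset.sum_erase_add _ _ (Finset.mem_univ ℓ₀),
              Finset.sum_erase_add _ _ (Finset.mem_univ ℓ₀), hσs, hσ₀ i]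
        have h2 : (∑ ℓ ∈ Finset.univ.erase ℓ₀, ((ι ℓ : ℕ) : ZMod m))
            = ∑ ℓ ∈ Finset.univ.erase ℓ₀, ((ι₀ i ℓ : ℕ) : ZMod m) :=
          Finset.sum_congr rfl fun ℓ hℓ => by
            rw [hidxeq ℓ (Finset.mem_erase.1 hℓ).1]
        rw [h2] at h1
        exact add_left_cancel h1
      have hxe : x ∈ edgeOf f := by rw [← hins]; exact Finset.mem_insert_self _ _
      have hxw : x = wmap f (ℓ₀, b₀) := by
        have h3 := mem_edgeOf.1 hxe
        rwa [hpos, hpx₀] at h3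
      have hfE : f ℓ₀ ∈ E (ι₀ i ℓ₀) := hsum ▸ hι ℓ₀
      cases hb : b₀
      · have hcomp : (f ℓ₀).1 = (f₀ i ℓ₀).1 := by
          have h4 := hq (ℓ₀, true) (by simp [hb])
          simpa [wmap] using h4
        have hx2 : x.2 = Sum.inr ((f ℓ₀).2) := by rw [hxw]; simp [wmap, hb]
        have hyi : y i = Sum.inl ((f₀ i ℓ₀).1) := by simp [hydef, hb]
        rw [hx2, hyi]
        show ((f₀ i ℓ₀).1, (f ℓ₀).2) ∈ E (ι₀ i ℓ₀)
        rw [← hcomp]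
        simpa using hfE
      · have hcomp : (f ℓ₀).2 = (f₀ i ℓ₀).2 := by
          have h4 := hq (ℓ₀, false) (by simp [hb])
          simpa [wmap] using h4
        have hx2 : x.2 = Sum.inl ((f ℓ₀).1) := by rw [hxw]; simp [wmap, hb]
        have hyi : y i = Sum.inr ((f₀ i ℓ₀).2) := by simp [hydef, hb]
        rw [hx2, hyi]
        show ((f ℓ₀).1, (f₀ i ℓ₀).2) ∈ E (ι₀ i ℓ₀)
        rw [← hcomp]
        simpa using hfE
    have hposX : ∀ x ∈ X, pos x = pos x₀ := by
      intro x hx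
      obtain ⟨f, -, hins⟩ := hedge x hx ⟨0, ht⟩
      exact pos_eq_of_completions hins (hins₀ ⟨0, ht⟩) (hnotmem x hx _) (hnotmem x₀ hx₀ _)
    have hfstX : ∀ x ∈ X, x.1 = ℓ₀ := fun x hx => by
      rw [← pos_fst, hposX x hx, hpx₀]
    set eX : X ≃ Fin s := X.equivFinOfCardEq hXcard with heXdef
    set xf : Fin s → (Fin n ⊕ Fin n) := fun j => ((eX.symm j : X) : W k n).2 with hxfdef
    have hxf_inj : Function.Injective xf := by
      intro j j' h
      apply eX.symm.injective
      apply Subtype.ext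
      have h1 := hfstX _ (eX.symm j).2
      have h2 := hfstX _ (eX.symm j').2
      exact Prod.ext (h1.trans h2.symm) h
    have hZ : ∀ i, y i ∈ {y' : Fin n ⊕ Fin n | ∃ c, ∀ j, badj (E c) (xf j) y'} :=
      fun i => ⟨ι₀ i ℓ₀, fun j => key i _ (eX.symm j).2⟩
    have hle : t ≤ {y' : Fin n ⊕ Fin n | ∃ c, ∀ j, badj (E c) (xf j) y'}.ncard := by
      have h1 : Set.range y ⊆ _ := Set.range_subset_iff.2 hZ
      have h2 := Set.ncard_le_ncard h1 (Set.toFinite _)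
      rwa [← Set.image_univ, Set.ncard_image_of_injective _ hy_inj, Set.ncard_univ,
        Nat.card_eq_fintype_card, Fintype.card_fin] at h2
    exact absurd (hrich xf hxf_inj) (by omega)
  have hcardG' : G'.card = T.card := Finset.card_image_of_injective _ edgeOf_injective
  have hWcard : Fintype.card (W k n) = 2 * k * n := by
    simp [W]; ring
  let ee : W k n ≃ Fin (2 * k * n) := Fintype.equivFinOfCardEq hWcard
  refine ⟨G'.image (Finset.image ee), ?_, ?_, ?_⟩
  · intro a ha
    rcases Finset.mem_image.1 ha with ⟨b, hb, rfl⟩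
    rcases Finset.mem_image.1 hb with ⟨f, -, rfl⟩
    rw [Finset.card_image_of_injective _ ee.injective, card_edgeOf]
  · intro h
    exact hfree (containsKst_of_image ee h)
  · rw [Finset.card_image_of_injective _ (Finset.image_injective ee.injective),
      hcardG', hcardT]
    exact hp
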